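/- Let A = [[1,2],[3,0]] and G := {v ∈ ℚ² : Aⁿ v ∈ ℤ² for some n ∈ ℕ}. There is no additive group homomorphism s : G → ℤ[1/3] satisfying s(a, a) = a for all a ∈ ℤ[1/3]. Equivalently, the inclusion θ : ℤ[1/3] → G, θ(a) = (a, a), admits no retraction, so the short exact sequence 0 → ℤ[1/3] → G → G/θ(ℤ[1/3]) → 0 does not split. -/

import Mathlib

/-- Let `A = [[1,2],[3,0]]` and `G = {v ∈ ℚ² : Aⁿ v ∈ ℤ² for some n}`.  There is no additive
group homomorphism `s : G → ℤ[1/3]` satisfying `s(a, a) = a` for all `a ∈ ℤ[1/3]`; i.e.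
the inclusion `θ : ℤ[1/3] → G`, `θ(a) = (a, a)`, admits no retraction, so the short exact
sequence `0 → ℤ[1/3] → G → G/θ(ℤ[1/3]) → 0` does not split. -/
theorem stmt13 (G : AddSubgroup (Fin 2 → ℚ))
    (hG : (G : Set (Fin 2 → ℚ)) =
      {v | ∃ n : ℕ, ∀ i, ∃ z : ℤ, ((!![(1 : ℚ), 2; 3, 0]) ^ n).mulVec v i = (z : ℚ)}) :
    ¬ ∃ s : G →+ ℚ,
      (∀ x : G, ∃ (k : ℤ) (m : ℕ), s x = (k : ℚ) / 3 ^ m) ∧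
      (∀ (x : G) (a : ℚ), (∃ (k : ℤ) (m : ℕ), a = (k : ℚ) / 3 ^ m) →
        (x : Fin 2 → ℚ) = a • ![1, 1] → s x = a) := by
  rintro ⟨s, hs1, hs2⟩
  have mem : ∀ v : Fin 2 → ℚ,
      (∃ n : ℕ, ∀ i, ∃ z : ℤ, ((!![(1 : ℚ), 2; 3, 0]) ^ n).mulVec v i = (z : ℚ)) → v ∈ G := by
    intro v hv
    rw [← SetLike.mem_coe, hG]
    exact hv
  -- eigenvalue computation
  have hstep : (!![(1 : ℚ), 2; 3, 0]).mulVec ![2, -3] = (-2 : ℚ) • ![2, -3] := by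
    funext i
    fin_cases i <;> simp [Matrix.mulVec, dotProduct, Fin.sum_univ_two] <;> norm_num
  have hAy : ∀ n : ℕ, ((!![(1 : ℚ), 2; 3, 0]) ^ n).mulVec ![2, -3]
      = ((-2 : ℚ) ^ n) • ![2, -3] := by
    intro n
    induction n with
    | zero => simp
    | succ n ih =>
      rw [pow_succ', ← Matrix.mulVec_mulVec, ih, Matrix.mulVec_smul, hstep,
        smul_smul, pow_succ', mul_comm]
  -- elements of G
  have hdmem : (![1, 1] : Fin 2 → ℚ) ∈ G := by
    refine mem _ ⟨0, fun i => ?_⟩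
    fin_cases i <;> exact ⟨1, by simp⟩
  have hxmem : (![1, -1] : Fin 2 → ℚ) ∈ G := by
    refine mem _ ⟨0, fun i => ?_⟩
    fin_cases i
    · exact ⟨1, by simp⟩
    · exact ⟨-1, by simp⟩
  have hymem : ∀ n : ℕ, (((2 : ℚ) ^ n)⁻¹ • ![2, -3] : Fin 2 → ℚ) ∈ G := by
    intro n
    refine mem _ ⟨n, fun i => ?_⟩
    rw [Matrix.mulVec_smul, hAy n, smul_smul]
    have h2 : ((2 : ℚ) ^ n)⁻¹ * (-2) ^ n = (-1 : ℚ) ^ n := by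
      rw [neg_pow]
      field_simp
    rw [h2]
    fin_cases i
    · exact ⟨(-1) ^ n * 2, by push_cast; simp⟩
    · exact ⟨(-1) ^ n * (-3), by push_cast; simp⟩
  set d : G := ⟨![1, 1], hdmem⟩ with hd_def
  set x : G := ⟨![1, -1], hxmem⟩ with hx_def
  set y : ℕ → G := fun n => ⟨((2 : ℚ) ^ n)⁻¹ • ![2, -3], hymem n⟩ with hy_def
  -- s d = 1
  have hsd : s d = 1 := by
    refine hs2 d 1 ⟨1, 0, by norm_num⟩ ?_
    show (![1, 1] : Fin 2 → ℚ) = (1 : ℚ) • ![1, 1]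
    rw [one_smul]
  -- 2^n • y n = y 0
  have hy0 : ∀ n : ℕ, (2 ^ n : ℕ) • y n = y 0 := by
    intro n
    apply Subtype.ext
    show (2 ^ n : ℕ) • (((2 : ℚ) ^ n)⁻¹ • ![2, -3]) = ((2 : ℚ) ^ 0)⁻¹ • ![2, -3]
    rw [← Nat.cast_smul_eq_nsmul ℚ, smul_smul]
    push_cast
    rw [mul_inv_cancel₀ (by positivity)]
    simp
  -- s (y 0) = 0
  have hsy0 : s (y 0) = 0 := by
    obtain ⟨k, m, hk⟩ := hs1 (y 0)
    have hdvd : ∀ n : ℕ, (2 : ℤ) ^ n ∣ k := by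
      intro n
      obtain ⟨kn, mn, hkn⟩ := hs1 (y n)
      have h1 : (2 ^ n : ℚ) * s (y n) = s (y 0) := by
        have hm := map_nsmul s (2 ^ n) (y n)
        rw [hy0 n, nsmul_eq_mul] at hm
        rw [hm]
        push_cast
        ring
      rw [hk, hkn] at h1
      have h2 : (2 : ℤ) ^ n * kn * 3 ^ m = k * 3 ^ mn := by
        have h3 : ((2 : ℤ) ^ n * kn * 3 ^ m : ℚ) = (k * 3 ^ mn : ℚ) := by
          push_cast
          field_simp at h1 ⊢
          linarith
        exact_mod_cast h3
      have hcop : IsCoprime ((2 : ℤ) ^ n) ((3 : ℤ) ^ mn) := by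
        apply IsCoprime.pow
        rw [Int.isCoprime_iff_gcd_eq_one]
        decide
      exact hcop.dvd_of_dvd_mul_right ⟨kn * 3 ^ m, by linarith [h2]⟩
    have hk0 : k = 0 := by
      by_contra hne
      have h1 : (2 : ℤ) ^ k.natAbs ≤ |k| :=
        Int.le_of_dvd (abs_pos.mpr hne) ((dvd_abs _ _).mpr (hdvd k.natAbs))
      have h2 : (k.natAbs : ℤ) < 2 ^ k.natAbs := by
        exact_mod_cast Nat.lt_two_pow_self (n := k.natAbs)
      rw [Int.abs_eq_natAbs] at h1
      omega
    rw [hk, hk0]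
    simp
  -- 5 x = d + 2 (y 0)
  have hrel : x + x + x + x + x = d + y 0 + y 0 := by
    apply Subtype.ext
    show (![1, -1] : Fin 2 → ℚ) + ![1, -1] + ![1, -1] + ![1, -1] + ![1, -1]
        = ![1, 1] + ((2 : ℚ) ^ 0)⁻¹ • ![2, -3] + ((2 : ℚ) ^ 0)⁻¹ • ![2, -3]
    funext i
    fin_cases i <;> norm_num
  have hsx : 5 * s x = 1 := by
    have := congrArg s hrel
    simp only [map_add] at this
    rw [hsd, hsy0] at this
    linarith
  obtain ⟨k, m, hk⟩ := hs1 x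
  rw [hk] at hsx
  have h5 : (5 : ℤ) * k = 3 ^ m := by
    have : (5 * k : ℚ) = (3 ^ m : ℚ) := by
      field_simp at hsx
      linarith
    exact_mod_cast this
  have hdvd5 : (5 : ℤ) ∣ 3 ^ m := ⟨k, h5.symm⟩
  have := Int.Prime.dvd_pow' (by norm_num) hdvd5
  norm_num at this
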